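/- arXiv:1405.6105 — 6 statements merged into one kernel-verified Lean document; each statement's English description precedes it below -/
import Mathlib

section
/- Let k ⊆ K be fields and let K[s] be the polynomial ring in one variable s over K, graded so that s is homogeneous of degree 1. Suppose R ⊆ K[s] is a homogeneous subring (i.e., the ℤ-grading of K[s] restricts to R) with k ⊆ R and R ⊄ K. Let L = frac(R) ∩ K, let L̂ be the algebraic closure of L and K̂ the algebraic closure of K (with L̂ ⊆ K̂). Then there exist an element c ∈ K̂ and an integer d ≥ 1 such that R ⊆ L̂[c·s^d] and L̂[c·s^d] is algebraic over R (every element of L̂[c·s^d] satisfies a nonzero polynomial with coefficients in R). -/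
open Polynomial


lemma aux_isIntegral_of_poly {Ω : Type*} [Field Ω] (F : Subfield Ω) (z : Ω)
    (Q : Polynomial Ω) (hQ : Q ≠ 0) (hc : ∀ i, Q.coeff i ∈ F) (he : Q.eval z = 0) :
    IsIntegral F z := by
  have hlift : Q ∈ Polynomial.lifts (algebraMap F Ω) := by
    rw [Polynomial.lifts_iff_coeff_lifts]
    intro i
    exact ⟨⟨Q.coeff i, hc i⟩, rfl⟩
  obtain ⟨P0, hP0⟩ := hlift
  simp only [Polynomial.coe_mapRingHom] at hP0
  have hP0ne : P0 ≠ 0 := by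
    rintro rfl
    rw [Polynomial.map_zero] at hP0
    exact hQ hP0.symm
  have haev : Polynomial.aeval z P0 = 0 := by
    rw [Polynomial.aeval_def, ← Polynomial.eval_map, hP0, he]
  exact IsAlgebraic.isIntegral ⟨P0, hP0ne, haev⟩

lemma aux_poly_of_isIntegral {Ω : Type*} [Field Ω] (F : Subfield Ω) (z : Ω)
    (h : IsIntegral F z) :
    ∃ Q : Polynomial Ω, Q ≠ 0 ∧ (∀ i, Q.coeff i ∈ F) ∧ Q.eval z = 0 := by
  obtain ⟨P0, hmonic, heval⟩ := h
  refine ⟨P0.map (algebraMap F Ω), (hmonic.map _).ne_zero, ?_, ?_⟩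
  · intro i
    rw [Polynomial.coeff_map]
    exact SetLike.coe_mem _
  · rw [Polynomial.eval_map]
    exact heval


lemma aux_clear_denoms {A Ω : Type*} [CommRing A] [Field Ω] (f : A →+* Ω)
    (hf : Function.Injective f) (S : Subring A) (y : Ω)
    (P : Polynomial Ω) (hP : P ≠ 0)
    (hcoeff : ∀ i, P.coeff i ∈ Subfield.closure (f '' S))
    (heval : P.eval y = 0) :
    ∃ p : Polynomial A, p ≠ 0 ∧ (∀ i, p.coeff i ∈ S) ∧ Polynomial.eval₂ f y p = 0 := by
  classical
  have hmap : Subring.closure (f '' S) = S.map f := by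
    rw [← Subring.coe_map, Subring.closure_eq]
  have h : ∀ i, ∃ ab : A × A, ab.1 ∈ S ∧ ab.2 ∈ S ∧ f ab.2 ≠ 0 ∧
      P.coeff i = f ab.1 / f ab.2 := by
    intro i
    by_cases h0 : P.coeff i = 0
    · exact ⟨(0, 1), S.zero_mem, S.one_mem, by simp, by simp [h0]⟩
    · obtain ⟨a, ha, b, hb, hab⟩ := (Subfield.mem_closure_iff).mp (hcoeff i)
      rw [hmap] at ha hb
      obtain ⟨a', ha', rfl⟩ := ha
      obtain ⟨b', hb', rfl⟩ := hb
      refine ⟨(a', b'), ha', hb', ?_, hab.symm⟩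
      intro hb0
      rw [hb0, div_zero] at hab
      exact h0 hab.symm
  choose ab hu hv hvne hcoe using h
  set n := P.natDegree with hn
  set B : Ω := ∏ i ∈ Finset.range (n + 1), f (ab i).2 with hB
  have hBne : B ≠ 0 := Finset.prod_ne_zero_iff.mpr fun i _ => hvne i
  set Q : Polynomial Ω := Polynomial.C B * P with hQdef
  have hQcoeff : ∀ i, Q.coeff i ∈ (f '' S) := by
    intro i
    rw [hQdef, Polynomial.coeff_C_mul]
    by_cases hi : i ≤ n
    · have hmem : i ∈ Finset.range (n + 1) := Finset.mem_range.mpr (Nat.lt_succ_of_le hi)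
      have hBsplit : B = f (ab i).2 * ∏ j ∈ (Finset.range (n + 1)).erase i, f (ab j).2 :=
        (Finset.mul_prod_erase _ _ hmem).symm
      have : B * P.coeff i = f ((ab i).1 * ∏ j ∈ (Finset.range (n + 1)).erase i, (ab j).2) := by
        rw [hcoe i, hBsplit, map_mul, map_prod, mul_comm (f (ab i).2), mul_assoc,
          ← mul_div_assoc, mul_div_cancel_left₀ _ (hvne i), mul_comm]
      rw [this]
      exact ⟨_, S.mul_mem (hu i) (S.prod_mem fun j _ => hv j), rfl⟩
    · have : P.coeff i = 0 := P.coeff_eq_zero_of_natDegree_lt (by omega)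
      rw [this, mul_zero]
      exact ⟨0, S.zero_mem, map_zero f⟩
  have hlift : Q ∈ Polynomial.lifts f := by
    rw [Polynomial.lifts_iff_coeff_lifts]
    intro i
    obtain ⟨s, _, hs⟩ := hQcoeff i
    exact ⟨s, hs⟩
  obtain ⟨p, hp⟩ := hlift
  simp only [Polynomial.coe_mapRingHom] at hp
  have hQne : Q ≠ 0 := mul_ne_zero (by simpa using hBne) hP
  refine ⟨p, ?_, ?_, ?_⟩
  · intro h0; rw [h0, Polynomial.map_zero] at hp; exact hQne hp.symm
  · intro i
    have : f (p.coeff i) ∈ f '' S := by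
      rw [← Polynomial.coeff_map, hp]; exact hQcoeff i
    obtain ⟨s, hs, hfs⟩ := this
    rwa [← hf hfs]
  · have : Polynomial.eval₂ f y p = Q.eval y := by
      rw [← hp, Polynomial.eval_map]
    rw [this, hQdef, Polynomial.eval_mul, Polynomial.eval_C, heval, mul_zero]

lemma aux_partB (K : Type*) [Field K] (R0 : Subring (Polynomial K))
    (c : AlgebraicClosure K) (d e n0 : ℕ) (a0 : K) (he : 0 < e)
    (hce : c ^ e = algebraMap K (AlgebraicClosure K) a0)
    (hm0 : (Polynomial.monomial n0 a0 : Polynomial K) ∈ R0) (hn0 : n0 = d * e)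
    (S : Set (AlgebraicClosure K))
    (hS : ∀ x ∈ S, ∃ q : Polynomial K, q ≠ 0 ∧
      (∀ i : ℕ, ∃ p ∈ R0, ∃ p' ∈ R0, p' ≠ 0 ∧ Polynomial.C (q.coeff i) * p' = p) ∧
      Polynomial.aeval x q = 0) :
    ∀ y ∈ Subring.closure
        ((Polynomial.C '' S) ∪ {Polynomial.C c * Polynomial.X ^ d}),
      ∃ p : Polynomial (Polynomial K), p ≠ 0 ∧ (∀ i : ℕ, p.coeff i ∈ R0) ∧
        Polynomial.eval₂ (Polynomial.mapRingHom (algebraMap K (AlgebraicClosure K))) y p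
          = 0 := by
  classical
  set φ : K →+* AlgebraicClosure K := algebraMap K (AlgebraicClosure K) with hφ
  set ψ : Polynomial K →+* Polynomial (AlgebraicClosure K) := Polynomial.mapRingHom φ with hψ
  set ι : Polynomial (AlgebraicClosure K) →+*
      FractionRing (Polynomial (AlgebraicClosure K)) :=
    algebraMap (Polynomial (AlgebraicClosure K))
      (FractionRing (Polynomial (AlgebraicClosure K))) with hι
  have hιinj : Function.Injective ι := IsFractionRing.injective _ _
  have hφinj : Function.Injective φ := φ.injective
  have hψinj : Function.Injective ψ := Polynomial.map_injective φ hφinj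
  set f : Polynomial K →+* FractionRing (Polynomial (AlgebraicClosure K)) :=
    ι.comp ψ with hf
  have hfinj : Function.Injective f := hιinj.comp hψinj
  set F : Subfield (FractionRing (Polynomial (AlgebraicClosure K))) :=
    Subfield.closure (f '' R0) with hF
  -- closure is inside the comap of the integral closure
  have key : Subring.closure ((Polynomial.C '' S) ∪ {Polynomial.C c * Polynomial.X ^ d}) ≤
      Subring.comap ι (integralClosure F _).toSubring := by
    rw [Subring.closure_le]
    rintro z (⟨x, hxS, rfl⟩ | hz)
    · -- generator C x with x ∈ S
      obtain ⟨q, hq, hqc, hqe⟩ := hS x hxS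
      set g : K →+* FractionRing (Polynomial (AlgebraicClosure K)) :=
        f.comp (Polynomial.C : K →+* Polynomial K) with hg
      have hginj : Function.Injective g := hfinj.comp Polynomial.C_injective
      show IsIntegral F (ι (Polynomial.C x))
      apply aux_isIntegral_of_poly F _ (q.map g)
      · exact fun h => hq ((Polynomial.map_eq_zero_iff hginj).mp h)
      · intro i
        rw [Polynomial.coeff_map]
        obtain ⟨p, hp, p', hp', hp'0, heq⟩ := hqc i
        have h1 : f (Polynomial.C (q.coeff i)) * f p' = f p := by
          rw [← map_mul, heq]
        have h2 : f p' ≠ 0 := fun h0 => hp'0 (hfinj (by rw [h0, map_zero]))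
        have h3 : g (q.coeff i) = f p / f p' := by
          rw [eq_div_iff h2]
          exact h1
        rw [h3]
        exact F.div_mem (Subfield.subset_closure ⟨p, hp, rfl⟩)
          (Subfield.subset_closure ⟨p', hp', rfl⟩)
      · set h : (AlgebraicClosure K) →+* FractionRing (Polynomial (AlgebraicClosure K)) :=
          ι.comp (Polynomial.C : (AlgebraicClosure K) →+* Polynomial (AlgebraicClosure K))
            with hh
        have hcomp : h.comp φ = g := by
          ext t
          simp [hh, hg, hf, hψ, Polynomial.map_C]
        have : Polynomial.eval₂ φ x q = 0 := by
          rw [← Polynomial.aeval_def]; exact hqe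
        calc (q.map g).eval (ι (Polynomial.C x))
            = Polynomial.eval₂ g (ι (Polynomial.C x)) q := Polynomial.eval_map g _
          _ = Polynomial.eval₂ (h.comp φ) (h x) q := by rw [hcomp]; rfl
          _ = h (Polynomial.eval₂ φ x q) := (Polynomial.hom_eval₂ q φ h x).symm
          _ = 0 := by rw [this, map_zero]
    · -- generator C c * X ^ d
      rw [Set.mem_singleton_iff] at hz
      subst hz
      show IsIntegral F (ι (Polynomial.C c * Polynomial.X ^ d))
      have hmem : f (Polynomial.monomial n0 a0) ∈ F :=
        Subfield.subset_closure ⟨_, hm0, rfl⟩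
      apply aux_isIntegral_of_poly F _
        (Polynomial.X ^ e - Polynomial.C (f (Polynomial.monomial n0 a0)))
      · exact Polynomial.X_pow_sub_C_ne_zero he _
      · intro i
        rw [Polynomial.coeff_sub, Polynomial.coeff_X_pow, Polynomial.coeff_C]
        refine F.sub_mem ?_ ?_ <;> split_ifs <;>
          first | exact F.one_mem | exact hmem | exact F.zero_mem
      · have hpow : (Polynomial.C c * Polynomial.X ^ d) ^ e = ψ (Polynomial.monomial n0 a0) := by
          rw [mul_pow, ← Polynomial.C_pow, ← pow_mul, hce]
          simp only [hψ, Polynomial.coe_mapRingHom, Polynomial.map_monomial]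
          rw [hn0, Polynomial.C_mul_X_pow_eq_monomial]
        rw [Polynomial.eval_sub, Polynomial.eval_pow, Polynomial.eval_X, Polynomial.eval_C,
          ← map_pow, hpow]
        show f _ - f _ = 0
        rw [sub_self]
  intro y hy
  have hint : IsIntegral F (ι y) := key hy
  obtain ⟨Q, hQ, hQc, hQe⟩ := aux_poly_of_isIntegral F (ι y) hint
  obtain ⟨p, hp0, hpc, hpe⟩ := aux_clear_denoms f hfinj R0 (ι y) Q hQ hQc hQe
  refine ⟨p, hp0, hpc, ?_⟩
  apply hιinj
  rw [map_zero]
  calc ι (Polynomial.eval₂ ψ y p) = Polynomial.eval₂ (ι.comp ψ) (ι y) p :=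
        Polynomial.hom_eval₂ p ψ ι y
    _ = 0 := hpe

lemma aux_monomial_mem {K : Type*} [Field K] (c : AlgebraicClosure K) (hc : c ≠ 0)
    (d : ℕ) (S : Set (AlgebraicClosure K)) (n : ℕ) (a : K) (hdn : d ∣ n)
    (hxS : (algebraMap K (AlgebraicClosure K) a) / c ^ (n / d) ∈ S) :
    Polynomial.map (algebraMap K (AlgebraicClosure K)) (Polynomial.monomial n a) ∈
      Subring.closure ((Polynomial.C '' S) ∪ {Polynomial.C c * Polynomial.X ^ d}) := by
  have heq : Polynomial.map (algebraMap K (AlgebraicClosure K)) (Polynomial.monomial n a)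
      = Polynomial.C (algebraMap K (AlgebraicClosure K) a / c ^ (n / d)) *
        (Polynomial.C c * Polynomial.X ^ d) ^ (n / d) := by
    rw [Polynomial.map_monomial, mul_pow, ← Polynomial.C_pow, ← pow_mul,
      ← mul_assoc, ← Polynomial.C_mul,
      div_mul_cancel₀ _ (pow_ne_zero _ hc), Nat.mul_div_cancel' hdn,
      Polynomial.C_mul_X_pow_eq_monomial]
  rw [heq]
  refine mul_mem ?_ (pow_mem ?_ _)
  · exact Subring.subset_closure (Set.mem_union_left _ ⟨_, hxS, rfl⟩)
  · exact Subring.subset_closure (Set.mem_union_right _ (Set.mem_singleton _))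

/-- Let `k ⊆ K` be fields and `K[s]` the polynomial ring, graded with `s` of degree one.
Let `R ⊆ K[s]` be a homogeneous subring containing `k` with `R ⊄ K`.  Let
`L = frac(R) ∩ K` and let `L̂ ⊆ K̂` be the algebraic closures of `L` and `K`.  Then there
are `c ∈ K̂` and an integer `d ≥ 1` with `R ⊆ L̂[c·s^d]`, and `L̂[c·s^d]` is algebraic
over `R`.  (Here `L̂` is realized inside `K̂ = AlgebraicClosure K` as the set of elements
algebraic over `L`, and everything is compared inside `K̂[s]`.) -/
theorem homogeneous_subring_in_algebraic_extension (k K : Type*) [Field k] [Field K]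
    [Algebra k K] (R : Subalgebra k (Polynomial K))
    (hhom : ∀ r ∈ R, ∀ i : ℕ, (Polynomial.monomial i (r.coeff i) : Polynomial K) ∈ R)
    (hnc : ∃ r ∈ R, r ∉ Set.range (Polynomial.C : K → Polynomial K)) :
    ∃ (c : AlgebraicClosure K) (d : ℕ), 1 ≤ d ∧
      ∀ T : Subring (Polynomial (AlgebraicClosure K)),
        T = Subring.closure
            ((Polynomial.C '' {x : AlgebraicClosure K |
                ∃ q : Polynomial K, q ≠ 0 ∧
                  (∀ i : ℕ, ∃ p ∈ R, ∃ p' ∈ R, p' ≠ 0 ∧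
                    Polynomial.C (q.coeff i) * p' = p) ∧
                  Polynomial.aeval x q = 0})
              ∪ {Polynomial.C c * Polynomial.X ^ d}) →
        (∀ r ∈ R, r.map (algebraMap K (AlgebraicClosure K)) ∈ T) ∧
        (∀ y ∈ T, ∃ p : Polynomial (Polynomial K), p ≠ 0 ∧ (∀ i : ℕ, p.coeff i ∈ R) ∧
          Polynomial.eval₂ (Polynomial.mapRingHom (algebraMap K (AlgebraicClosure K))) y p
            = 0) := by
  classical
  obtain ⟨r0, hr0R, hr0⟩ := hnc
  have hex : ∃ n0, 1 ≤ n0 ∧ r0.coeff n0 ≠ 0 := by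
    by_contra hcon
    push_neg at hcon
    refine hr0 ⟨r0.coeff 0, ?_⟩
    ext i
    rcases Nat.eq_zero_or_pos i with hi | hi
    · subst hi; simp
    · rw [Polynomial.coeff_C, if_neg (by omega)]
      exact (hcon i hi).symm
  obtain ⟨n0, hn01, ha0⟩ := hex
  set a0 := r0.coeff n0 with ha0def
  have hm0R : (Polynomial.monomial n0 a0 : Polynomial K) ∈ R := hhom r0 hr0R n0
  obtain ⟨g, hg⟩ := Int.subgroup_cyclic (AddSubgroup.closure
    {z : ℤ | ∃ n : ℕ, (n : ℤ) = z ∧ ∃ a : K, a ≠ 0 ∧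
      (Polynomial.monomial n a : Polynomial K) ∈ R})
  set d := g.natAbs with hddef
  have hdvd : ∀ (n : ℕ) (a : K), a ≠ 0 →
      (Polynomial.monomial n a : Polynomial K) ∈ R → d ∣ n := by
    intro n a ha hmem
    have h1 : (n : ℤ) ∈ AddSubgroup.closure
        {z : ℤ | ∃ n : ℕ, (n : ℤ) = z ∧ ∃ a : K, a ≠ 0 ∧
          (Polynomial.monomial n a : Polynomial K) ∈ R} :=
      AddSubgroup.subset_closure ⟨n, rfl, a, ha, hmem⟩
    rw [hg, AddSubgroup.mem_closure_singleton] at h1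
    obtain ⟨m, hm⟩ := h1
    have h2 : (d : ℤ) ∣ (n : ℤ) := by
      rw [hddef, Int.natAbs_dvd]
      exact ⟨m, by rw [← hm, zsmul_eq_mul]; push_cast; ring⟩
    exact_mod_cast h2
  have hdn0 : d ∣ n0 := hdvd n0 a0 ha0 hm0R
  have hd1 : 1 ≤ d := by
    rcases Nat.eq_zero_or_pos d with h | h
    · rw [h] at hdn0
      have := Nat.eq_zero_of_zero_dvd hdn0
      omega
    · exact h
  set e := n0 / d with hedef
  have hn0de : n0 = d * e := (Nat.mul_div_cancel' hdn0).symm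
  have he : 0 < e := by
    rcases Nat.eq_zero_or_pos e with h | h
    · rw [h, mul_zero] at hn0de; omega
    · exact h
  have hφinj : Function.Injective (algebraMap K (AlgebraicClosure K)) :=
    (algebraMap K (AlgebraicClosure K)).injective
  have hφa0 : algebraMap K (AlgebraicClosure K) a0 ≠ 0 :=
    fun h => ha0 (hφinj (by rw [h, map_zero]))
  obtain ⟨c, hce⟩ := IsAlgClosed.exists_pow_nat_eq (algebraMap K (AlgebraicClosure K) a0) he
  have hcne : c ≠ 0 := fun h => hφa0 (by rw [← hce, h, zero_pow (by omega)])
  refine ⟨c, d, hd1, ?_⟩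
  intro T hT
  subst hT
  have hkey : ∀ (n : ℕ) (a : K), a ≠ 0 → (Polynomial.monomial n a : Polynomial K) ∈ R →
      (algebraMap K (AlgebraicClosure K) a) / c ^ (n / d) ∈ {x : AlgebraicClosure K |
        ∃ q : Polynomial K, q ≠ 0 ∧
          (∀ i : ℕ, ∃ p ∈ R, ∃ p' ∈ R, p' ≠ 0 ∧
            Polynomial.C (q.coeff i) * p' = p) ∧
          Polynomial.aeval x q = 0} := by
    intro n a ha hmem
    have hdn := hdvd n a ha hmem
    refine ⟨Polynomial.X ^ n0 - Polynomial.C (a ^ n0 / a0 ^ n), ?_, ?_, ?_⟩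
    · intro h
      have h2 := congrArg (fun p => Polynomial.coeff p n0) h
      simp only [Polynomial.coeff_sub, Polynomial.coeff_X_pow, if_pos rfl,
        Polynomial.coeff_C, if_neg (by omega : ¬ n0 = 0), Polynomial.coeff_zero,
        sub_zero] at h2
      exact one_ne_zero h2
    · intro i
      rw [Polynomial.coeff_sub, Polynomial.coeff_X_pow, Polynomial.coeff_C]
      split_ifs with h1 h2 h2
      · omega
      · exact ⟨1, R.one_mem, 1, R.one_mem, one_ne_zero, by simp⟩
      · refine ⟨-((Polynomial.monomial n a : Polynomial K) ^ n0),
          neg_mem (pow_mem hmem n0),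
          (Polynomial.monomial n0 a0 : Polynomial K) ^ n, pow_mem hm0R n, ?_, ?_⟩
        · rw [Polynomial.monomial_pow, Ne, Polynomial.monomial_eq_zero_iff]
          exact pow_ne_zero n ha0
        · rw [zero_sub, map_neg, neg_mul, neg_inj,
            Polynomial.monomial_pow, Polynomial.monomial_pow,
            Polynomial.C_mul_monomial, mul_comm n0 n,
            div_mul_cancel₀ _ (pow_ne_zero n ha0)]
      · exact ⟨0, R.zero_mem, 1, R.one_mem, one_ne_zero, by simp⟩
    · have harith : (n / d) * n0 = n * e := by
        rw [hn0de, ← mul_assoc, Nat.div_mul_cancel hdn]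
      have hx : ((algebraMap K (AlgebraicClosure K) a) / c ^ (n / d)) ^ n0
          = algebraMap K (AlgebraicClosure K) (a ^ n0 / a0 ^ n) := by
        rw [div_pow, ← pow_mul, harith, mul_comm n e, pow_mul, hce, ← map_pow, ← map_pow, ← map_div₀]
      simp only [map_sub, map_pow, Polynomial.aeval_X, Polynomial.aeval_C]
      rw [hx, sub_self]
  constructor
  · intro r hr
    have hsum : r.map (algebraMap K (AlgebraicClosure K)) =
        ∑ i ∈ r.support,
          (Polynomial.monomial i (r.coeff i)).map (algebraMap K (AlgebraicClosure K)) := by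
      conv_lhs => rw [Polynomial.as_sum_support r]
      rw [Polynomial.map_sum]
    rw [hsum]
    refine Subring.sum_mem _ fun i hi => ?_
    exact aux_monomial_mem c hcne d _ i (r.coeff i)
      (hdvd i _ (Polynomial.mem_support_iff.mp hi) (hhom r hr i))
      (hkey i _ (Polynomial.mem_support_iff.mp hi) (hhom r hr i))
  · intro y hy
    obtain ⟨p, h1, h2, h3⟩ := aux_partB K R.toSubring c d e n0 a0 he hce
      (Subalgebra.mem_toSubring.mpr hm0R) hn0de _
      (fun x hx => by
        obtain ⟨q, hq1, hq2, hq3⟩ := hx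
        refine ⟨q, hq1, fun i => ?_, hq3⟩
        obtain ⟨p, hp, p', hp', h4, h5⟩ := hq2 i
        exact ⟨p, Subalgebra.mem_toSubring.mpr hp, p',
          Subalgebra.mem_toSubring.mpr hp', h4, h5⟩) y hy
    exact ⟨p, h1, fun i => Subalgebra.mem_toSubring.mp (h2 i), h3⟩
end

section
/- (Nowicki) Let k be a field and A a commutative k-algebra. Then for any field extension L of k, A is finitely generated as a k-algebra if and only if L ⊗_k A is finitely generated as an L-algebra. -/
open TensorProduct

/-- (Nowicki)  Let `k` be a field and `A` a commutative `k`-algebra.  Then, for any field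
extension `L/k`, `A` is finitely generated over `k` if and only if `L ⊗ₖ A` is finitely
generated over `L`. -/
theorem finiteType_iff_finiteType_baseChange (k : Type*) [Field k]
    (A : Type*) [CommRing A] [Algebra k A] (L : Type*) [Field L] [Algebra k L] :
    Algebra.FiniteType k A ↔ Algebra.FiniteType L (TensorProduct k L A) := by
  constructor
  · intro h
    infer_instance
  · intro h
    obtain ⟨s, hs⟩ := h.1
    choose t ht using fun x : L ⊗[k] A => TensorProduct.exists_finset x
    classical
    set S : Finset A := s.biUnion fun x => (t x).image Prod.snd with hS
    set A₀ := Algebra.adjoin k (S : Set A) with hA₀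
    let φ : L ⊗[k] A₀ →ₐ[L] L ⊗[k] A :=
      Algebra.TensorProduct.map (AlgHom.id L L) A₀.val
    have hφ : Function.Surjective φ := by
      rw [← AlgHom.range_eq_top, ← top_le_iff, ← hs, Algebra.adjoin_le_iff]
      intro x hx
      have hx' : x = ∑ p ∈ t x, p.1 ⊗ₜ[k] p.2 := ht x
      rw [hx']
      refine Subalgebra.sum_mem _ fun p hp => ?_
      have hmem : p.2 ∈ A₀ := by
        apply Algebra.subset_adjoin
        simp only [Finset.coe_biUnion, Set.mem_iUnion, Finset.coe_image, Set.mem_image, S]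
        exact ⟨x, hx, p, hp, rfl⟩
      exact ⟨p.1 ⊗ₜ[k] (⟨p.2, hmem⟩ : A₀), rfl⟩
    have key : LinearMap.lTensor L (Subalgebra.toSubmodule A₀).mkQ = 0 := by
      apply LinearMap.ext; intro x
      obtain ⟨y, rfl⟩ := hφ x
      simp only [LinearMap.zero_apply]
      induction y with
      | zero => rw [map_zero φ, (LinearMap.lTensor L (Subalgebra.toSubmodule A₀).mkQ).map_zero]
      | tmul l a =>
          have : (Subalgebra.toSubmodule A₀).mkQ (a : A) = 0 := by
            rw [Submodule.mkQ_apply, Submodule.Quotient.mk_eq_zero]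
            exact a.2
          simp only [φ, Algebra.TensorProduct.map_tmul, AlgHom.coe_id, id_eq,
            Subalgebra.coe_val, LinearMap.lTensor_tmul, this, tmul_zero]
      | add a b ha hb => rw [map_add φ, (LinearMap.lTensor L (Subalgebra.toSubmodule A₀).mkQ).map_add, ha, hb, add_zero]
    have hmkQ : (Subalgebra.toSubmodule A₀).mkQ = 0 :=
      (Module.FaithfullyFlat.zero_iff_lTensor_zero k L _).mpr key
    have htop : A₀ = ⊤ := by
      rw [← Algebra.toSubmodule_eq_top, eq_top_iff]
      intro a _
      have := congrFun (congrArg DFunLike.coe hmkQ) a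
      rwa [Submodule.mkQ_apply, LinearMap.zero_apply, Submodule.Quotient.mk_eq_zero] at this
    exact ⟨⟨S, htop⟩⟩
end

section
/- Let k ⊆ K be fields and let K[s] be the polynomial ring in one variable over K. Let r_1, …, r_m ∈ K[s] be nonzero, and grade the polynomial ring k[x_1,…,x_m] by assigning to x_i the degree deg(r_i). Suppose h ∈ k[x_1,…,x_m] is nonzero with h(r_1,…,r_m) = 0, and let H be the highest-degree homogeneous summand of h with respect to this weighted grading. Then H(r̄_1,…,r̄_m) = 0, where r̄_i denotes the leading form of r_i. In particular, if r_1,…,r_m are algebraically dependent over k, then so are r̄_1,…,r̄_m. -/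
open Polynomial MvPolynomial

/-- Let `k ⊆ K` be fields and `r_1,…,r_m ∈ K[s]` nonzero.  Grade `k[x_1,…,x_m]` by letting
`x_i` have weight `deg r_i`.  If `h ≠ 0` satisfies `h(r_1,…,r_m) = 0` and `H` is the
highest-degree weighted-homogeneous summand of `h`, then `H(r̄_1,…,r̄_m) = 0`, where `r̄_i`
is the leading form of `r_i`.  In particular `r̄_1,…,r̄_m` are algebraically dependent
over `k`. -/
theorem leadingForms_algebraically_dependent (k K : Type*) [Field k] [Field K] [Algebra k K]
    (m : ℕ) (r : Fin m → Polynomial K) (hr : ∀ i, r i ≠ 0)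
    (h : MvPolynomial (Fin m) k) (hh : h ≠ 0)
    (hrel : MvPolynomial.aeval r h = 0) :
    MvPolynomial.aeval
        (fun i => (Polynomial.C (r i).leadingCoeff * Polynomial.X ^ (r i).natDegree :
          Polynomial K))
        (MvPolynomial.weightedHomogeneousComponent (fun i => (r i).natDegree)
          (MvPolynomial.weightedTotalDegree (fun i => (r i).natDegree) h) h) = 0
      ∧ ¬ AlgebraicIndependent k
          (fun i => (Polynomial.C (r i).leadingCoeff * Polynomial.X ^ (r i).natDegree :
            Polynomial K)) := by
  classical
  set w : Fin m → ℕ := fun i => (r i).natDegree with hw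
  set D : ℕ := weightedTotalDegree w h with hD
  set L : Fin m → Polynomial K := fun i => Polynomial.C (r i).leadingCoeff * Polynomial.X ^ w i with hL
  -- weight as a finite sum
  have hweight : ∀ d : Fin m →₀ ℕ, (Finsupp.weight w d : ℕ) = ∑ i, d i * w i := by
    intro d
    rw [Finsupp.weight_apply, Finsupp.sum_fintype]
    · simp [mul_comm]
    · intro i; simp
  -- natDegree of the product
  have hdeg : ∀ d : Fin m →₀ ℕ,
      (∏ i, (r i) ^ d i).natDegree = (Finsupp.weight w d : ℕ) := by
    intro d
    rw [Polynomial.natDegree_prod _ _ (fun i _ => pow_ne_zero _ (hr i)), hweight]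
    simp [Polynomial.natDegree_pow, mul_comm, hw]
  have hlc : ∀ d : Fin m →₀ ℕ,
      (∏ i, (r i) ^ d i).leadingCoeff = ∏ i, (r i).leadingCoeff ^ d i := by
    intro d
    rw [Polynomial.leadingCoeff_prod]
    simp [Polynomial.leadingCoeff_pow]
  -- product of leading forms
  have hLpow : ∀ d : Fin m →₀ ℕ,
      (∏ i, (L i) ^ d i) =
        Polynomial.C (∏ i, (r i).leadingCoeff ^ d i) * Polynomial.X ^ (Finsupp.weight w d : ℕ) := by
    intro d
    rw [hweight]
    simp only [hL, mul_pow, ← Polynomial.C_pow, ← pow_mul]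
    rw [Finset.prod_mul_distrib, Finset.prod_pow_eq_pow_sum, map_prod]
    simp [mul_comm]
  -- coefficient of `aeval r h` at degree D
  have hcoeff : ∀ d ∈ h.support, (∏ i, (r i) ^ d i).coeff D =
      if (Finsupp.weight w d : ℕ) = D then ∏ i, (r i).leadingCoeff ^ d i else 0 := by
    intro d hd
    have hle : (Finsupp.weight w d : ℕ) ≤ D := Finset.le_sup hd
    by_cases hcase : (Finsupp.weight w d : ℕ) = D
    · rw [if_pos hcase, ← hcase, ← hdeg d, Polynomial.coeff_natDegree, hlc]
    · rw [if_neg hcase]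
      exact Polynomial.coeff_eq_zero_of_natDegree_lt (by rw [hdeg]; omega)
  -- the key identity
  have key : MvPolynomial.aeval L (weightedHomogeneousComponent w D h) =
      Polynomial.C ((MvPolynomial.aeval r h).coeff D) * Polynomial.X ^ D := by
    have hexp : (MvPolynomial.aeval r h) =
        ∑ d ∈ h.support, algebraMap k (Polynomial K) (h.coeff d) * ∏ i, (r i) ^ d i := by
      rw [MvPolynomial.aeval_def, MvPolynomial.eval₂_eq']
    rw [hexp, Polynomial.finset_sum_coeff]
    rw [weightedHomogeneousComponent_apply, map_sum]
    rw [map_sum, Finset.sum_mul, Finset.sum_filter]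
    apply Finset.sum_congr rfl
    intro d hd
    rw [Polynomial.algebraMap_apply, Polynomial.coeff_C_mul, hcoeff d hd]
    by_cases hcase : (Finsupp.weight w d : ℕ) = D
    · rw [if_pos hcase, if_pos hcase, MvPolynomial.aeval_monomial,
        Finsupp.prod_fintype _ _ (by intro i; simp), hLpow, hcase]
      rw [Polynomial.algebraMap_apply, map_mul]
      ring
    · rw [if_neg hcase, if_neg hcase, mul_zero, Polynomial.C_0, zero_mul]
  have h1 : MvPolynomial.aeval L (weightedHomogeneousComponent w D h) = 0 := by
    rw [key, hrel]; simp
  refine ⟨h1, ?_⟩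
  -- the top component is nonzero
  have hne : weightedHomogeneousComponent w D h ≠ 0 := by
    obtain ⟨d, hd, hdeq⟩ := Finset.exists_mem_eq_sup h.support
      (by simpa using hh) (fun d => (Finsupp.weight w d : ℕ))
    intro hzero
    have hdD : (Finsupp.weight w) d = D := hdeq.symm
    have := MvPolynomial.coeff_weightedHomogeneousComponent (w := w) D h d
    rw [hzero, if_pos hdD] at this
    exact (MvPolynomial.mem_support_iff.mp hd) this.symm
  intro hAI
  have hinj := hAI
  rw [algebraicIndependent_iff_injective_aeval] at hinj
  exact hne (hinj (by rw [h1, map_zero]))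
end

section
/- Let k be an algebraically closed field, let K be a field containing k, and let K[s] be the polynomial ring in one variable over K. Suppose u, v ∈ K[s] are nonzero with deg u = deg v ≥ 1, and suppose u and v are algebraically dependent over k. Then there exist α, β ∈ k, not both zero, such that deg(αu + βv) < deg v. -/
open Polynomial

lemma alg_mem_range {k K : Type*} [Field k] [IsAlgClosed k] [Field K] [Algebra k K]
    {t : K} (h : IsAlgebraic k t) : ∃ c : k, algebraMap k K c = t := by
  have hi := h.isIntegral
  have hirr := minpoly.irreducible hi
  have hdeg := IsAlgClosed.degree_eq_one_of_irreducible k hirr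
  have hmon := minpoly.monic hi
  have hnd : (minpoly k t).natDegree = 1 := natDegree_eq_of_degree_eq_some hdeg
  have hp : minpoly k t = X + C ((minpoly k t).coeff 0) := hmon.eq_X_add_C hnd
  have haev := minpoly.aeval k t
  rw [hp] at haev
  simp only [map_add, aeval_X, aeval_C] at haev
  exact ⟨-((minpoly k t).coeff 0), by rw [map_neg]; linear_combination -haev⟩

/-- Let `k` be an algebraically closed field, `K ⊇ k` a field, and `u, v ∈ K[s]` nonzero with
`deg u = deg v ≥ 1`.  If `u` and `v` are algebraically dependent over `k`, then there are
`α, β ∈ k`, not both zero, with `deg (αu + βv) < deg v`. -/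
theorem exists_combination_degree_lt (k K : Type*) [Field k] [IsAlgClosed k]
    [Field K] [Algebra k K] (u v : Polynomial K) (hu : u ≠ 0) (hv : v ≠ 0)
    (hdeg : u.degree = v.degree) (hdeg1 : 1 ≤ v.degree)
    (hdep : ¬ AlgebraicIndependent k ![u, v]) :
    ∃ α β : k, ¬(α = 0 ∧ β = 0) ∧
      (algebraMap k (Polynomial K) α * u + algebraMap k (Polynomial K) β * v).degree
        < v.degree := by
  rw [algebraicIndependent_iff] at hdep
  push_neg at hdep
  obtain ⟨P, hPev, hP0⟩ := hdep
  set n := v.natDegree with hn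
  have hun : u.natDegree = n := natDegree_eq_of_degree_eq hdeg
  have hnpos : 0 < n := natDegree_pos_iff_degree_pos.mpr (lt_of_lt_of_le (by norm_num) hdeg1)
  set a := u.leadingCoeff with haa
  set b := v.leadingCoeff with hbb
  have ha : a ≠ 0 := leadingCoeff_ne_zero.mpr hu
  have hb : b ≠ 0 := leadingCoeff_ne_zero.mpr hv
  set t := a * b⁻¹ with ht
  set D := P.totalDegree with hD
  set N := D * n with hN
  have hsumd : ∀ d : Fin 2 →₀ ℕ, (d.sum fun _ e => e) = d 0 + d 1 := by
    intro d
    rw [Finsupp.sum_fintype _ _ (fun _ => rfl)]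
    exact Fin.sum_univ_two _
  have hexp : (MvPolynomial.aeval ![u, v] P : Polynomial K)
      = ∑ d ∈ P.support, C (algebraMap k K (MvPolynomial.coeff d P)) * (u ^ d 0 * v ^ d 1) := by
    rw [MvPolynomial.aeval_def, MvPolynomial.eval₂_eq']
    refine Finset.sum_congr rfl fun d hd => ?_
    rw [Fin.prod_univ_two]
    simp [Polynomial.algebraMap_apply]
  have hco : ∀ d ∈ P.support,
      (C (algebraMap k K (MvPolynomial.coeff d P)) * (u ^ d 0 * v ^ d 1)).coeff N
        = if d 0 + d 1 = D then algebraMap k K (MvPolynomial.coeff d P) * (a ^ d 0 * b ^ d 1)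
          else 0 := by
    intro d hd
    have hnd : (u ^ d 0 * v ^ d 1).natDegree = (d 0 + d 1) * n := by
      rw [natDegree_mul (pow_ne_zero _ hu) (pow_ne_zero _ hv), natDegree_pow, natDegree_pow,
        hun]
      ring
    by_cases hDd : d 0 + d 1 = D
    · rw [if_pos hDd, coeff_C_mul]
      have hNe : N = (u ^ d 0 * v ^ d 1).natDegree := by rw [hnd, hDd]
      rw [hNe, coeff_natDegree, leadingCoeff_mul, leadingCoeff_pow, leadingCoeff_pow]
    · rw [if_neg hDd, coeff_C_mul]
      have hle : d 0 + d 1 ≤ D := (hsumd d) ▸ MvPolynomial.le_totalDegree hd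
      have hlt : (u ^ d 0 * v ^ d 1).natDegree < N := by
        rw [hnd, hN]
        exact (Nat.mul_lt_mul_right hnpos).mpr (lt_of_le_of_ne hle hDd)
      rw [coeff_eq_zero_of_natDegree_lt hlt, mul_zero]
  have hNzero : ∑ d ∈ P.support,
      (if d 0 + d 1 = D then algebraMap k K (MvPolynomial.coeff d P) * (a ^ d 0 * b ^ d 1)
        else 0) = 0 := by
    rw [← Finset.sum_congr rfl hco, ← finset_sum_coeff, ← hexp, hPev, coeff_zero]
  set S := P.support.filter (fun d => d 0 + d 1 = D) with hS
  have hNzero' : ∑ d ∈ S, algebraMap k K (MvPolynomial.coeff d P) * (a ^ d 0 * b ^ d 1) = 0 := by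
    rw [hS, Finset.sum_filter]
    exact hNzero
  set Q : Polynomial k := ∑ d ∈ S, C (MvPolynomial.coeff d P) * X ^ (d 0) with hQ
  have hQt : (Polynomial.aeval t Q : K)
      = ∑ d ∈ S, algebraMap k K (MvPolynomial.coeff d P) * t ^ d 0 := by
    rw [hQ, map_sum]
    refine Finset.sum_congr rfl fun d hd => ?_
    simp
  have hab : a = t * b := by
    rw [ht]
    field_simp
  have key : b ^ D * (Polynomial.aeval t Q : K) = 0 := by
    rw [hQt, Finset.mul_sum, ← hNzero']
    refine Finset.sum_congr rfl fun d hd => ?_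
    have hDd : d 0 + d 1 = D := (Finset.mem_filter.mp hd).2
    rw [hab, mul_pow, ← hDd, pow_add]
    ring
  have hQt0 : (Polynomial.aeval t Q : K) = 0 := by
    rcases mul_eq_zero.mp key with h | h
    · exact absurd h (pow_ne_zero _ hb)
    · exact h
  have hPsupp : P.support.Nonempty := MvPolynomial.support_nonempty.mpr hP0
  obtain ⟨d₀, hd₀, hD₀⟩ := Finset.exists_mem_eq_sup _ hPsupp (fun d => d.sum fun _ e => e)
  have hD₀' : d₀ 0 + d₀ 1 = D := by
    rw [← hsumd d₀, ← hD₀]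
    rfl
  have hd₀S : d₀ ∈ S := Finset.mem_filter.mpr ⟨hd₀, hD₀'⟩
  have hQc : Q.coeff (d₀ 0) = MvPolynomial.coeff d₀ P := by
    rw [hQ, finset_sum_coeff]
    rw [Finset.sum_eq_single d₀]
    · simp
    · intro d hd hne
      rw [coeff_C_mul, coeff_X_pow]
      rcases eq_or_ne (d 0) (d₀ 0) with he | he
      · exfalso
        apply hne
        have h1 : d 0 + d 1 = D := (Finset.mem_filter.mp hd).2
        have h2 : d 1 = d₀ 1 := by omega
        ext i
        fin_cases i
        · exact he
        · exact h2
      · rw [if_neg (fun h' => he h'.symm), mul_zero]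
    · intro h
      exact (h hd₀S).elim
  have hQne : Q ≠ 0 := by
    intro h
    rw [h, coeff_zero] at hQc
    exact (MvPolynomial.mem_support_iff.mp hd₀) hQc.symm
  obtain ⟨c, hc⟩ := alg_mem_range ⟨Q, hQne, hQt0⟩
  refine ⟨1, -c, by simp, ?_⟩
  have hvdeg : v.degree = (n : WithBot ℕ) := degree_eq_natDegree hv
  rw [hvdeg, map_one, one_mul]
  rw [Polynomial.degree_lt_iff_coeff_zero]
  intro m hm
  have hm' : n ≤ m := by exact_mod_cast hm
  rw [coeff_add, Polynomial.algebraMap_apply, coeff_C_mul, map_neg, hc]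
  rcases eq_or_lt_of_le hm' with he | hlt
  · rw [← he]
    have hucoeff : u.coeff n = a := by rw [← hun]; rfl
    have hvcoeff : v.coeff n = b := rfl
    rw [hucoeff, hvcoeff, hab]
    ring
  · rw [coeff_eq_zero_of_natDegree_lt (hun ▸ hlt), coeff_eq_zero_of_natDegree_lt hlt]
    ring
end

section
/- Let B be an integral domain of characteristic zero and let D be a locally nilpotent derivation of B. If f ∈ B satisfies Df ∈ fB (i.e., f divides Df), then Df = 0. -/
open Finset

private lemma derivation_iterate_zero {B : Type*} [CommRing B]
    (D : Derivation ℤ B B) (n : ℕ) : (⇑D)^[n] (0 : B) = 0 :=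
  Function.iterate_fixed (map_zero D) n

private lemma derivation_iterate_eq_zero_of_le {B : Type*} [CommRing B]
    (D : Derivation ℤ B B) {x : B} {n k : ℕ} (hn : (⇑D)^[n] x = 0) (h : n ≤ k) :
    (⇑D)^[k] x = 0 := by
  rw [← Nat.sub_add_cancel h, Function.iterate_add_apply, hn, derivation_iterate_zero]

private lemma derivation_iterate_leibniz {B : Type*} [CommRing B]
    (D : Derivation ℤ B B) (p q : B) (n : ℕ) :
    (⇑D)^[n] (p * q) =
      ∑ k ∈ range n.succ, (n.choose k • ((⇑D)^[n - k] p * (⇑D)^[k] q)) := by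
  induction n with
  | zero => simp [Finset.range]
  | succ n IH =>
    have hmul : ∀ a b : B, D (a * b) = D a * b + a * D b := by
      intro a b
      rw [Derivation.leibniz]
      simp [smul_eq_mul]
      ring
    calc
      (⇑D)^[n + 1] (p * q) =
          D (∑ k ∈ range n.succ,
              n.choose k • ((⇑D)^[n - k] p * (⇑D)^[k] q)) := by
        rw [Function.iterate_succ_apply', IH]
      _ = (∑ k ∈ range n.succ,
            n.choose k • ((⇑D)^[n - k + 1] p * (⇑D)^[k] q)) +
          ∑ k ∈ range n.succ,
            n.choose k • ((⇑D)^[n - k] p * (⇑D)^[k + 1] q) := by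
        rw [map_sum]
        simp_rw [map_nsmul, hmul, Function.iterate_succ_apply',
          smul_add, sum_add_distrib]
      _ = (∑ k ∈ range n.succ,
                n.choose k.succ • ((⇑D)^[n - k] p * (⇑D)^[k + 1] q)) +
              1 • ((⇑D)^[n + 1] p * (⇑D)^[0] q) +
            ∑ k ∈ range n.succ, n.choose k • ((⇑D)^[n - k] p * (⇑D)^[k + 1] q) :=
        ?_
      _ = ((∑ k ∈ range n.succ, n.choose k • ((⇑D)^[n - k] p * (⇑D)^[k + 1] q)) +
              ∑ k ∈ range n.succ,
                n.choose k.succ • ((⇑D)^[n - k] p * (⇑D)^[k + 1] q)) +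
            1 • ((⇑D)^[n + 1] p * (⇑D)^[0] q) := by
        rw [add_comm, add_assoc]
      _ = (∑ i ∈ range n.succ,
              (n + 1).choose (i + 1) • ((⇑D)^[n + 1 - (i + 1)] p * (⇑D)^[i + 1] q)) +
            1 • ((⇑D)^[n + 1] p * (⇑D)^[0] q) := by
        simp_rw [Nat.choose_succ_succ, Nat.succ_sub_succ, add_smul, sum_add_distrib]
      _ = ∑ k ∈ range n.succ.succ,
            n.succ.choose k • ((⇑D)^[n.succ - k] p * (⇑D)^[k] q) := by
        rw [sum_range_succ' _ n.succ, Nat.choose_zero_right, tsub_zero]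
    congr
    refine (sum_range_succ' _ _).trans (congr_arg₂ (· + ·) ?_ ?_)
    · rw [sum_range_succ, Nat.choose_succ_self, zero_smul, add_zero]
      refine sum_congr rfl fun k hk => ?_
      rw [mem_range] at hk
      congr
      omega
    · rw [Nat.choose_zero_right, tsub_zero]

/-- Let `B` be an integral domain of characteristic zero and let `D` be a locally nilpotent
derivation of `B`. If `f ∈ B` satisfies `Df ∈ fB` (i.e. `f` divides `Df`), then `Df = 0`. -/
theorem lnd_dvd_self_eq_zero {B : Type*} [CommRing B] [IsDomain B] [CharZero B]
    (D : Derivation ℤ B B) (hD : ∀ b : B, ∃ n : ℕ, (⇑D)^[n] b = 0)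
    (f : B) (hf : ∃ b : B, D f = f * b) : D f = 0 := by
  classical
  by_contra hne
  obtain ⟨b, hb⟩ := hf
  have hf0 : f ≠ 0 := by rintro rfl; exact hne (by simp)
  have hb0 : b ≠ 0 := by rintro rfl; exact hne (by simpa using hb)
  -- minimal nilpotency indices
  have hfex := hD f
  have hbex := hD b
  set n := Nat.find hfex with hn
  set m := Nat.find hbex with hm
  have hnf : (⇑D)^[n] f = 0 := Nat.find_spec hfex
  have hmb : (⇑D)^[m] b = 0 := Nat.find_spec hbex
  have hnmin : ∀ k < n, (⇑D)^[k] f ≠ 0 := fun k hk => Nat.find_min hfex hk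
  have hmmin : ∀ k < m, (⇑D)^[k] b ≠ 0 := fun k hk => Nat.find_min hbex hk
  have hn2 : 2 ≤ n := by
    by_contra h
    interval_cases n
    · exact hf0 hnf
    · exact hne hnf
  have hm1 : 1 ≤ m := by
    by_contra h
    interval_cases m
    exact hb0 hmb
  set N := n + m - 2 with hN
  -- D^[N] (f * b) = 0 since f * b = D f and N + 1 ≥ n
  have hzero : (⇑D)^[N] (f * b) = 0 := by
    rw [← hb, ← Function.iterate_succ_apply]
    exact derivation_iterate_eq_zero_of_le D hnf (by omega)
  -- but by Leibniz it equals a single nonzero term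
  have hleib := derivation_iterate_leibniz D f b N
  have hsum : ∑ k ∈ range N.succ, (N.choose k • ((⇑D)^[N - k] f * (⇑D)^[k] b))
      = N.choose (m - 1) • ((⇑D)^[N - (m - 1)] f * (⇑D)^[m - 1] b) := by
    apply Finset.sum_eq_single
    · intro k hkmem hkne
      rw [mem_range] at hkmem
      rcases lt_or_ge k m with hkm | hkm
      · -- then k ≤ m - 2, so N - k ≥ n
        have : (⇑D)^[N - k] f = 0 :=
          derivation_iterate_eq_zero_of_le D hnf (by omega)
        simp [this]
      · have : (⇑D)^[k] b = 0 :=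
          derivation_iterate_eq_zero_of_le D hmb hkm
        simp [this]
    · intro h
      exact absurd (mem_range.mpr (by omega)) h
  rw [hsum] at hleib
  have hNm : N - (m - 1) = n - 1 := by omega
  rw [hNm] at hleib
  have hterm : N.choose (m - 1) • ((⇑D)^[n - 1] f * (⇑D)^[m - 1] b) ≠ 0 := by
    rw [nsmul_eq_mul]
    apply mul_ne_zero
    · exact_mod_cast (Nat.cast_ne_zero (R := B)).mpr (Nat.choose_pos (by omega)).ne'
    · exact mul_ne_zero (hnmin _ (by omega)) (hmmin _ (by omega))
  exact hterm (hleib ▸ hzero)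
end

section
/- Let B be an integral domain containing ℚ and let D be a nonzero locally nilpotent derivation of B with kernel A = ker D. Then A is algebraically closed in B (every element of B that is algebraic over A lies in A), and tr.deg_A B = 1 (the fraction field of B has transcendence degree one over the fraction field of A). -/
set_option linter.unusedSectionVars false

def Derivation.kerSubalgebra {R B : Type*} [CommRing R] [CommRing B] [Algebra R B]
    (D : Derivation R B B) : Subalgebra R B where
  carrier := {b : B | D b = 0}
  add_mem' := by
    intro a b ha hb
    simp only [Set.mem_setOf_eq] at *
    rw [map_add, ha, hb, add_zero]
  mul_mem' := by
    intro a b ha hb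
    simp only [Set.mem_setOf_eq] at *
    rw [D.leibniz, ha, hb, smul_zero, smul_zero, add_zero]
  algebraMap_mem' := by intro r; simp

section Part1
variable {B : Type*} [CommRing B] [IsDomain B] [Algebra ℚ B] (D : Derivation ℚ B B)

lemma Derivation.coe_ker_eq_zero (a : ↥D.kerSubalgebra) : D (a : B) = 0 := a.2

lemma deriv_aeval (p : Polynomial ↥D.kerSubalgebra) (b : B) :
    D (Polynomial.aeval b p) = Polynomial.aeval b (Polynomial.derivative p) * D b := by
  induction p using Polynomial.induction_on with
  | C a =>
      have h1 : (Polynomial.aeval b) (Polynomial.C a) = (a : B) := by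
        rw [Polynomial.aeval_C]; rfl
      rw [h1, D.coe_ker_eq_zero a]
      simp
  | add p q hp hq => rw [map_add, map_add, hp, hq, map_add, map_add]; ring
  | monomial n a _ =>
      have h1 : (Polynomial.aeval b) (Polynomial.C a * Polynomial.X ^ (n+1))
          = (a : B) * b ^ (n+1) := by
        rw [map_mul, Polynomial.aeval_C, map_pow, Polynomial.aeval_X]; rfl
      have h2 : Polynomial.derivative (Polynomial.C a * Polynomial.X ^ (n+1))
          = Polynomial.C (a * (n+1 : ℕ)) * Polynomial.X ^ n := by
        rw [Polynomial.derivative_C_mul_X_pow]; simp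
      rw [h1, h2, D.leibniz, D.leibniz_pow, D.coe_ker_eq_zero a]
      have h3 : (Polynomial.aeval b) (Polynomial.C (a * (n+1:ℕ)) * Polynomial.X ^ n)
          = ((a * (n+1:ℕ) : ↥D.kerSubalgebra) : B) * b ^ n := by
        rw [map_mul, Polynomial.aeval_C, map_pow, Polynomial.aeval_X]; rfl
      rw [h3]
      push_cast
      simp only [smul_zero, add_zero, Nat.add_sub_cancel, smul_smul, smul_eq_mul,
        nsmul_eq_mul]
      push_cast
      ring

lemma ker_aux : ∀ (n : ℕ) (p : Polynomial ↥D.kerSubalgebra) (b : B), p ≠ 0 →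
    p.natDegree ≤ n → Polynomial.aeval b p = 0 → D b = 0 := by
  intro n
  induction n with
  | zero =>
      intro p b hp hdeg hpb
      exfalso
      have h0 : p.natDegree = 0 := Nat.le_zero.mp hdeg
      have hC : p = Polynomial.C (p.coeff 0) := Polynomial.eq_C_of_natDegree_eq_zero h0
      rw [hC, Polynomial.aeval_C] at hpb
      have : (p.coeff 0 : B) = 0 := hpb
      have : p.coeff 0 = 0 := Subtype.ext this
      exact hp (by rw [hC, this, map_zero])
  | succ n ih =>
      intro p b hp hdeg hpb
      by_cases h0 : p.natDegree = 0
      · exfalso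
        have hC : p = Polynomial.C (p.coeff 0) := Polynomial.eq_C_of_natDegree_eq_zero h0
        rw [hC, Polynomial.aeval_C] at hpb
        have : (p.coeff 0 : B) = 0 := hpb
        have : p.coeff 0 = 0 := Subtype.ext this
        exact hp (by rw [hC, this, map_zero])
      by_cases hDb : D b = 0
      · exact hDb
      haveI : Nontrivial ↥D.kerSubalgebra := ⟨⟨1, 0, fun h => one_ne_zero (congrArg Subtype.val h)⟩⟩
      haveI : CharZero ↥D.kerSubalgebra :=
        charZero_of_injective_algebraMap (algebraMap ℚ ↥D.kerSubalgebra).injective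
      have h1 : Polynomial.aeval b (Polynomial.derivative p) * D b = 0 := by
        rw [← deriv_aeval, hpb, map_zero]
      have h2 : Polynomial.aeval b (Polynomial.derivative p) = 0 :=
        (mul_eq_zero.mp h1).resolve_right hDb
      have h3 : Polynomial.derivative p ≠ 0 := by
        intro hd
        exact h0 (Polynomial.natDegree_eq_zero_of_derivative_eq_zero hd)
      have h4 : (Polynomial.derivative p).natDegree ≤ n :=
        Nat.lt_succ_iff.mp (lt_of_lt_of_le (Polynomial.natDegree_derivative_lt h0) hdeg)
      exact ih (Polynomial.derivative p) b h3 h4 h2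

end Part1

section Part2
variable {B : Type*} [CommRing B] [IsDomain B] [Algebra ℚ B] (D : Derivation ℚ B B)

lemma antider (p : Polynomial ↥D.kerSubalgebra) :
    ∃ q : Polynomial ↥D.kerSubalgebra, Polynomial.derivative q = p := by
  refine ⟨p.sum fun i c => Polynomial.C ((((i : ℚ)+1)⁻¹) • c) * Polynomial.X ^ (i+1), ?_⟩
  rw [Polynomial.sum]
  rw [map_sum]
  have h1 : ∀ i ∈ p.support,
      Polynomial.derivative (Polynomial.C ((((i : ℚ)+1)⁻¹) • p.coeff i) * Polynomial.X ^ (i+1))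
      = Polynomial.C (p.coeff i) * Polynomial.X ^ i := by
    intro i _
    rw [Polynomial.derivative_C_mul_X_pow]
    have hc : ((((i : ℚ)+1)⁻¹ • p.coeff i) * ((i+1 : ℕ) : ↥D.kerSubalgebra)) = p.coeff i := by
      rw [Algebra.smul_def]
      have : ((i+1 : ℕ) : ↥D.kerSubalgebra) = algebraMap ℚ _ ((i : ℚ)+1) := by
        push_cast; simp
      rw [this, mul_assoc, mul_comm (p.coeff i), ← mul_assoc, ← map_mul,
        inv_mul_cancel₀ (by positivity : ((i:ℚ)+1) ≠ 0)]
      simp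
    rw [Nat.add_sub_cancel, hc]
  rw [Finset.sum_congr rfl h1]
  exact Polynomial.sum_C_mul_X_pow_eq p

lemma exists_pow_mul_mem {r : B} (hr : D (D r) = 0) :
    ∀ (n : ℕ) (b : B), (⇑D)^[n] b = 0 →
      ∃ (N : ℕ) (p : Polynomial ↥D.kerSubalgebra),
        (D r) ^ N * b = Polynomial.aeval r p := by
  intro n
  induction n with
  | zero =>
      intro b hb
      refine ⟨0, 0, ?_⟩
      simp only [Function.iterate_zero, id_eq] at hb
      simp [hb]
  | succ n ih =>
      intro b hb
      obtain ⟨N, p, hp⟩ := ih (D b) (by rw [← Function.iterate_succ_apply]; exact hb)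
      obtain ⟨q, hq⟩ := antider D p
      set a : ↥D.kerSubalgebra := ⟨D r, hr⟩ with ha
      have hDq : D (Polynomial.aeval r q) = Polynomial.aeval r p * D r := by
        rw [deriv_aeval, hq]
      have hpow : D ((D r) ^ (N+1)) = 0 := by
        have h1 : ((D r) ^ (N+1) : B) = ((a ^ (N+1) : ↥D.kerSubalgebra) : B) := by
          rw [SubmonoidClass.coe_pow]
        rw [h1]
        exact (a ^ (N+1)).2
      have key : D ((D r) ^ (N+1) * b - Polynomial.aeval r q) = 0 := by
        rw [map_sub, hDq, D.leibniz, hpow, smul_zero, add_zero, smul_eq_mul]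
        have : Polynomial.aeval r p * D r = (D r)^(N+1) * D b := by
          rw [← hp]; ring
        rw [this, sub_self]
      refine ⟨N+1, q + Polynomial.C ⟨_, key⟩, ?_⟩
      rw [map_add, Polynomial.aeval_C]
      have : ((algebraMap ↥D.kerSubalgebra B) ⟨(D r) ^ (N+1) * b - Polynomial.aeval r q, key⟩ : B)
          = (D r) ^ (N+1) * b - Polynomial.aeval r q := rfl
      rw [this]
      ring

end Part2

set_option maxHeartbeats 1000000 in
lemma no_pair {F L : Type*} [Field F] [Field L] [Algebra F L] {t x y : L}
    (ht : ∀ z : L, z ∈ IntermediateField.adjoin F {t})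
    (h : AlgebraicIndependent F (fun o : Option Unit => o.elim y fun _ => x)) : False := by
  classical
  have hx1 : AlgebraicIndependent F (fun _ : Unit => x) :=
    h.comp (fun _ : Unit => some ()) (Function.injective_of_subsingleton _)
  have hty : Transcendental (Algebra.adjoin F (Set.range fun _ : Unit => x)) y :=
    (hx1.option_iff_transcendental y).mp h
  rw [Set.range_const] at hty
  have htx : Transcendental F x := hx1.transcendental ()
  obtain ⟨u, v, hxuv⟩ := (IntermediateField.mem_adjoin_simple_iff F x).mp (ht x)
  have hv : Polynomial.aeval t v ≠ 0 := by
    intro h0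
    rw [h0, div_zero] at hxuv
    exact htx (hxuv ▸ isAlgebraic_zero)
  have hxv : x * Polynomial.aeval t v = Polynomial.aeval t u := by
    rw [hxuv, div_mul_cancel₀ _ hv]
  set E := IntermediateField.adjoin F {x} with hE
  have hxE : x ∈ E := IntermediateField.mem_adjoin_simple_self F x
  set x' : ↥E := ⟨x, hxE⟩ with hx'
  set P : Polynomial ↥E :=
    Polynomial.C x' * (v.map (algebraMap F ↥E)) - u.map (algebraMap F ↥E) with hP
  have hPt : Polynomial.aeval t P = 0 := by
    rw [hP, map_sub, map_mul, Polynomial.aeval_C, Polynomial.aeval_map_algebraMap,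
      Polynomial.aeval_map_algebraMap]
    have : (algebraMap ↥E L) x' = x := rfl
    rw [this, hxv, sub_self]
  have hv0 : v ≠ 0 := fun h0 => hv (by rw [h0, map_zero])
  have hP0 : P ≠ 0 := by
    intro h0
    obtain ⟨i, hi⟩ : ∃ i, v.coeff i ≠ 0 := by
      by_contra hall; push_neg at hall; exact hv0 (Polynomial.ext hall)
    have hci : P.coeff i = 0 := by rw [h0]; simp
    rw [hP] at hci
    simp only [Polynomial.coeff_sub, Polynomial.coeff_C_mul, Polynomial.coeff_map,
      sub_eq_zero] at hci
    have hne : algebraMap F ↥E (v.coeff i) ≠ 0 := fun hz =>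
      hi ((algebraMap F ↥E).injective (by rw [hz, map_zero]))
    have hx'' : x' = algebraMap F ↥E (u.coeff i / v.coeff i) := by
      rw [map_div₀]
      field_simp
      linear_combination hci
    apply htx
    have hxx : x = algebraMap F L (u.coeff i / v.coeff i) := by
      have h2 := congrArg (algebraMap ↥E L) hx''
      rwa [← IsScalarTower.algebraMap_apply F ↥E L] at h2
    rw [hxx]
    exact isAlgebraic_algebraMap _
  have htalg : IsAlgebraic ↥E t := ⟨P, hP0, hPt⟩
  haveI halgE : Algebra.IsAlgebraic ↥E (IntermediateField.adjoin ↥E {t}) :=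
    IntermediateField.isAlgebraic_adjoin_simple htalg.isIntegral
  have hyE : y ∈ IntermediateField.adjoin ↥E {t} := by
    have hle : IntermediateField.adjoin F {t} ≤
        (IntermediateField.adjoin ↥E {t}).restrictScalars F := by
      rw [IntermediateField.adjoin_le_iff]
      intro z hz
      rw [Set.mem_singleton_iff] at hz
      rw [hz]
      exact IntermediateField.mem_adjoin_simple_self ↥E t
    exact hle (ht y)
  have hyalgE : IsAlgebraic ↥E y := by
    have h1 : IsAlgebraic ↥E (⟨y, hyE⟩ : IntermediateField.adjoin ↥E {t}) :=
      Algebra.IsAlgebraic.isAlgebraic _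
    exact (isAlgebraic_algHom_iff (IntermediateField.val _) Subtype.val_injective).mpr h1
  -- fraction-ring bridge
  set R₀ := Algebra.adjoin F {x} with hR₀
  have hle₀ : R₀ ≤ E.toSubalgebra := Algebra.adjoin_le (Set.singleton_subset_iff.mpr hxE)
  let incl : ↥R₀ →+* ↥E :=
    { toFun := fun c => ⟨c.1, hle₀ c.2⟩
      map_one' := rfl
      map_mul' := fun _ _ => rfl
      map_zero' := rfl
      map_add' := fun _ _ => rfl }
  letI : Algebra ↥R₀ ↥E := incl.toAlgebra
  haveI : IsScalarTower ↥R₀ ↥E L := IsScalarTower.of_algebraMap_eq fun c => rfl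
  haveI : IsFractionRing ↥R₀ ↥E := by
    refine ⟨?_, ?_, ?_⟩
    · rintro ⟨c, hc⟩
      rw [isUnit_iff_ne_zero]
      intro h0
      have h1 := congrArg Subtype.val h0
      have hc0 : c = 0 := Subtype.ext h1
      subst hc0
      exact zero_notMem_nonZeroDivisors hc
    · intro z
      obtain ⟨rr, ss, hz⟩ := (IntermediateField.mem_adjoin_simple_iff F (z : L)).mp z.2
      by_cases hss : Polynomial.aeval x ss = 0
      · refine ⟨(0, 1), ?_⟩
        have hz0 : z = 0 := Subtype.ext (by rw [hz, hss, div_zero]; simp)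
        rw [hz0]
        simp only [zero_mul]
        exact (map_zero (algebraMap ↥R₀ ↥E)).symm
      · have hrr : Polynomial.aeval x rr ∈ R₀ := by
          rw [hR₀, Algebra.adjoin_singleton_eq_range_aeval]; exact ⟨rr, rfl⟩
        have hss' : Polynomial.aeval x ss ∈ R₀ := by
          rw [hR₀, Algebra.adjoin_singleton_eq_range_aeval]; exact ⟨ss, rfl⟩
        refine ⟨(⟨_, hrr⟩, ⟨⟨_, hss'⟩,
          mem_nonZeroDivisors_of_ne_zero (fun h0 => hss (congrArg Subtype.val h0))⟩), ?_⟩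
        apply Subtype.ext
        show (z : L) * Polynomial.aeval x ss = Polynomial.aeval x rr
        rw [hz, div_mul_cancel₀ _ hss]
    · intro c d hcd
      have h1 := congrArg Subtype.val hcd
      have hcd' : c = d := Subtype.ext h1
      exact ⟨1, by rw [hcd']⟩
  exact hty ((IsFractionRing.isAlgebraic_iff ↥R₀ ↥E L).mpr hyalgE)

noncomputable def trdeg (R A : Type*) [CommRing R] [CommRing A] [Algebra R A] : Cardinal :=
  ⨆ s : { s : Set A // AlgebraicIndependent R ((↑) : s → A) }, Cardinal.mk s.1

set_option maxHeartbeats 1000000 in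
/-- Let `B` be a domain containing `ℚ` and `D` a nonzero locally nilpotent derivation of `B`
with kernel `A`.  Then `A` is algebraically closed in `B`, and `tr.deg_A B = 1`, i.e. the
fraction field `FB` of `B` has transcendence degree one over the fraction field `FA`
of `A`. -/
theorem kernel_algebraically_closed_and_trdeg_one (B : Type*) [CommRing B] [IsDomain B]
    [Algebra ℚ B] (D : Derivation ℚ B B)
    (hln : ∀ b : B, ∃ n : ℕ, (⇑D)^[n] b = 0) (hD : D ≠ 0)
    (FA FB : Type*) [Field FA] [Field FB]
    [Algebra ↥D.kerSubalgebra FA] [IsFractionRing ↥D.kerSubalgebra FA]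
    [Algebra B FB] [IsFractionRing B FB]
    [Algebra FA FB] [Algebra ↥D.kerSubalgebra FB]
    [IsScalarTower ↥D.kerSubalgebra FA FB] [IsScalarTower ↥D.kerSubalgebra B FB] :
    (∀ b : B, IsAlgebraic ↥D.kerSubalgebra b → b ∈ D.kerSubalgebra) ∧
    trdeg FA FB = 1 := by
  classical
  have part1 : ∀ b : B, IsAlgebraic ↥D.kerSubalgebra b → b ∈ D.kerSubalgebra := by
    intro b hb
    obtain ⟨p, hp, hpb⟩ := hb
    exact ker_aux D p.natDegree p b hp le_rfl hpb
  refine ⟨part1, ?_⟩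
  -- find a local slice r
  obtain ⟨b₀, hb₀⟩ : ∃ b₀ : B, D b₀ ≠ 0 := by
    by_contra hall
    push_neg at hall
    exact hD (by ext b; simp [hall b])
  obtain ⟨n₀, hn₀, hn₀min⟩ : ∃ n₀ : ℕ, (⇑D)^[n₀] b₀ = 0 ∧ ∀ k < n₀, (⇑D)^[k] b₀ ≠ 0 :=
    ⟨Nat.find (hln b₀), Nat.find_spec (hln b₀), fun k hk => Nat.find_min (hln b₀) hk⟩
  obtain ⟨m, rfl⟩ : ∃ m, n₀ = m + 2 := by
    rcases n₀ with _ | n₀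
    · exact absurd (hn₀ ▸ rfl : b₀ = 0) (fun h => hb₀ (by rw [h, map_zero]))
    rcases n₀ with _ | n₀
    · exact absurd hn₀ (by simpa using hb₀)
    exact ⟨n₀, by ring⟩
  set r : B := (⇑D)^[m] b₀ with hrdef
  have hDr : D r ≠ 0 := by
    have := hn₀min (m+1) (by omega)
    rwa [Function.iterate_succ_apply'] at this
  have hDDr : D (D r) = 0 := by
    have : (⇑D)^[m+2] b₀ = 0 := hn₀
    rwa [Function.iterate_succ_apply', Function.iterate_succ_apply'] at this
  set π := algebraMap B FB with hπ
  have hπinj : Function.Injective π := IsFractionRing.injective B FB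
  set t : FB := π r with htdef
  set K := IntermediateField.adjoin FA {t} with hK
  have htK : t ∈ K := IntermediateField.mem_adjoin_simple_self FA t
  have hcomm : ∀ c : ↥D.kerSubalgebra,
      algebraMap FA FB (algebraMap ↥D.kerSubalgebra FA c) = π (c : B) := by
    intro c
    have h1 := smul_assoc c (1 : FA) (1 : FB)
    rw [Subalgebra.smul_def] at h1
    simpa [Algebra.smul_def] using h1
  have hπA : ∀ c : ↥D.kerSubalgebra, π (c : B) ∈ K := by
    intro c
    rw [← hcomm c]
    exact K.algebraMap_mem _
  have memK : ∀ p : Polynomial ↥D.kerSubalgebra, π (Polynomial.aeval r p) ∈ K := by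
    intro p
    induction p using Polynomial.induction_on with
    | C c =>
        have h1 : (Polynomial.aeval r) (Polynomial.C c) = (c : B) := by
          rw [Polynomial.aeval_C]; rfl
        rw [h1]; exact hπA c
    | add p q hp hq => rw [map_add, map_add]; exact add_mem hp hq
    | monomial n c _ =>
        have h1 : (Polynomial.aeval r) (Polynomial.C c * Polynomial.X ^ (n+1))
            = (c : B) * r ^ (n+1) := by
          rw [map_mul, Polynomial.aeval_C, map_pow, Polynomial.aeval_X]; rfl
        rw [h1, map_mul, map_pow]
        exact mul_mem (hπA c) (pow_mem htK _)
  have hπDr : π (D r) ≠ 0 := fun h => hDr (hπinj (by rw [h, map_zero]))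
  have hπDrK : π (D r) ∈ K := hπA ⟨D r, hDDr⟩
  have hBmem : ∀ b : B, π b ∈ K := by
    intro b
    obtain ⟨nb, hnb⟩ := hln b
    obtain ⟨N, p, hp⟩ := exists_pow_mul_mem D hDDr nb b hnb
    have h1 : (π (D r)) ^ N * π b = π (Polynomial.aeval r p) := by
      rw [← map_pow, ← map_mul, hp]
    have h2 : π b = ((π (D r)) ^ N)⁻¹ * π (Polynomial.aeval r p) := by
      rw [← h1, inv_mul_cancel_left₀ (pow_ne_zero _ hπDr)]
    rw [h2]
    exact mul_mem (K.inv_mem (pow_mem hπDrK _)) (memK p)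
  have hKall : ∀ z : FB, z ∈ K := by
    intro z
    obtain ⟨bz, sz, _, hz⟩ := IsFractionRing.div_surjective (A := B) z
    rw [← hz]
    exact div_mem (hBmem bz) (hBmem sz)
  -- t is transcendental over FA
  have htr : Transcendental FA t := by
    rintro ⟨p, hp0, hpt⟩
    set q := IsLocalization.integerNormalization
      (nonZeroDivisors ↥D.kerSubalgebra) p with hqdef
    have hq0 : q ≠ 0 := fun h =>
      hp0 (IsFractionRing.integerNormalization_eq_zero_iff.mp h)
    have h1 : Polynomial.eval₂
        ((algebraMap FA FB).comp (algebraMap ↥D.kerSubalgebra FA)) t q = 0 :=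
      IsLocalization.integerNormalization_eval₂_eq_zero _ (algebraMap FA FB) p hpt
    have h2 : (algebraMap FA FB).comp (algebraMap ↥D.kerSubalgebra FA)
        = π.comp (algebraMap ↥D.kerSubalgebra B) := by
      ext c
      exact hcomm c
    rw [h2] at h1
    have h3 : π (Polynomial.eval₂ (algebraMap ↥D.kerSubalgebra B) r q) = 0 := by
      rw [Polynomial.hom_eval₂]
      exact h1
    have h4 : Polynomial.aeval r q = 0 := hπinj (by rw [map_zero, Polynomial.aeval_def]; exact h3)
    exact hDr (part1 r ⟨q, hq0, h4⟩)
  -- bound on independent sets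
  have hbound : ∀ s : { s : Set FB // AlgebraicIndependent FA ((↑) : s → FB) },
      Cardinal.mk s.1 ≤ 1 := by
    rintro ⟨s, hs⟩
    rw [Cardinal.mk_le_one_iff_set_subsingleton]
    intro x hx y hy
    by_contra hxy
    refine no_pair (t := t) (x := x) (y := y) hKall ?_
    have hf : Function.Injective
        (fun o : Option Unit => (Option.elim o ⟨y, hy⟩ fun _ => ⟨x, hx⟩ : s)) := by
      rintro (_ | _) (_ | _) hh
      · rfl
      · exact absurd (congrArg Subtype.val hh).symm hxy
      · exact absurd (congrArg Subtype.val hh) hxy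
      · rfl
    have h4 := hs.comp _ hf
    have h5 : ((↑) : s → FB) ∘ (fun o : Option Unit =>
        (Option.elim o ⟨y, hy⟩ fun _ => ⟨x, hx⟩ : s))
        = fun o : Option Unit => o.elim y fun _ => x := by
      funext o; cases o <;> rfl
    rwa [h5] at h4
  have hone : AlgebraicIndependent FA ((↑) : ({t} : Set FB) → FB) := by
    have h1 : AlgebraicIndependent FA (fun _ : Unit => t) :=
      algebraicIndependent_unique_type_iff.mpr htr
    have h2 := h1.to_subtype_range
    rwa [Set.range_const] at h2
  haveI : Nonempty { s : Set FB // AlgebraicIndependent FA ((↑) : s → FB) } :=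
    ⟨⟨{t}, hone⟩⟩
  rw [trdeg]
  apply le_antisymm
  · exact ciSup_le fun s => hbound s
  · have h6 := le_ciSup (f := fun s : { s : Set FB // AlgebraicIndependent FA ((↑) : s → FB) }
      => Cardinal.mk s.1) ⟨1, by rintro c ⟨s, rfl⟩; exact hbound s⟩ ⟨{t}, hone⟩
    calc (1 : Cardinal) = Cardinal.mk ({t} : Set FB) := (Cardinal.mk_singleton t).symm
      _ ≤ _ := h6
end
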